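/- Let P(t,x) be the unique polynomial of the form a₀ + a₁x + a₂t + a₃x² + a₄xt + a₅t² + a₆xt² interpolating the interface point values q^n_{i±1/2}, q^{n+1/2}_{i±1/2}, q^{n+1}_{i±1/2} and matching the cell average q̄ⁿ_i at time tⁿ. Then (1/(ΔtΔx))∫_{tⁿ}^{tⁿ+Δt}∫_{x_{i−1/2}}^{x_{i+1/2}} P(t,x) dx dt = q̄ⁿ_i + (1/12)(−5(q^n_{i−1/2}+q^n_{i+1/2}) + (q^{n+1}_{i−1/2}+q^{n+1}_{i+1/2}) + 4(q^{n+1/2}_{i−1/2}+q^{n+1/2}_{i+1/2})). -/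

import Mathlib

/-- The interpolation polynomial for the Active Flux source quadrature:
P(t,x) = a₀ + a₁x + a₂t + a₃x² + a₄xt + a₅t² + a₆xt². -/
noncomputable def stmt8P (a : Fin 7 → ℝ) (t x : ℝ) : ℝ :=
  a 0 + a 1 * x + a 2 * t + a 3 * x ^ 2 + a 4 * x * t + a 5 * t ^ 2 + a 6 * x * t ^ 2

lemma quad_integral (A B C l r : ℝ) :
    (∫ x in l..r, (A + B * x + C * x ^ 2))
      = A * (r - l) + B / 2 * (r ^ 2 - l ^ 2) + C / 3 * (r ^ 3 - l ^ 3) := by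
  have h : ∀ x ∈ Set.uIcc l r, HasDerivAt
      (fun x : ℝ => A * x + B / 2 * x ^ 2 + C / 3 * x ^ 3) (A + B * x + C * x ^ 2) x := by
    intro x _
    have : HasDerivAt (fun x : ℝ => A * x + B / 2 * x ^ 2 + C / 3 * x ^ 3)
        (A * 1 + B / 2 * (2 * x) + C / 3 * (3 * x ^ 2)) x := by
      apply HasDerivAt.add
      apply HasDerivAt.add
      · exact (hasDerivAt_id x).const_mul A
      · simpa using ((hasDerivAt_pow 2 x).const_mul (B / 2))
      · simpa using ((hasDerivAt_pow 3 x).const_mul (C / 3))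
    convert this using 1
    ring
  have hi : IntervalIntegrable (fun x : ℝ => A + B * x + C * x ^ 2) MeasureTheory.volume l r := by
    apply Continuous.intervalIntegrable
    continuity
  rw [intervalIntegral.integral_eq_sub_of_hasDerivAt h hi]
  ring

/-- The space-time average of the interpolating polynomial yields the 1D Active Flux
source quadrature formula with weights (−5/12, 4/12, 1/12) on interface values and 1
on the cell average. -/
theorem stmt_8 (Δx Δt tn xi : ℝ) (hΔx : 0 < Δx) (hΔt : 0 < Δt)
    (qln qrn qlh qrh qln1 qrn1 qbar : ℝ) (a : Fin 7 → ℝ)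
    (h1 : stmt8P a (tn + Δt) (xi - Δx / 2) = qln1)
    (h2 : stmt8P a (tn + Δt) (xi + Δx / 2) = qrn1)
    (h3 : stmt8P a (tn + Δt / 2) (xi - Δx / 2) = qlh)
    (h4 : stmt8P a (tn + Δt / 2) (xi + Δx / 2) = qrh)
    (h5 : stmt8P a tn (xi - Δx / 2) = qln)
    (h6 : stmt8P a tn (xi + Δx / 2) = qrn)
    (h7 : (∫ x in (xi - Δx / 2)..(xi + Δx / 2), stmt8P a tn x) = qbar * Δx) :
    (1 / (Δt * Δx)) * ∫ t in tn..(tn + Δt), ∫ x in (xi - Δx / 2)..(xi + Δx / 2), stmt8P a t x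
      = qbar + (1 / 12) * (-5 * (qln + qrn) + (qln1 + qrn1) + 4 * (qlh + qrh)) := by
  set l := xi - Δx / 2
  set r := xi + Δx / 2
  -- inner integral as explicit polynomial in t
  have inner : ∀ t : ℝ, (∫ x in l..r, stmt8P a t x)
      = (a 0 + a 2 * t + a 5 * t ^ 2) * (r - l)
        + (a 1 + a 4 * t + a 6 * t ^ 2) / 2 * (r ^ 2 - l ^ 2)
        + a 3 / 3 * (r ^ 3 - l ^ 3) := by
    intro t
    have : (∫ x in l..r, stmt8P a t x)
        = ∫ x in l..r, ((a 0 + a 2 * t + a 5 * t ^ 2)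
            + (a 1 + a 4 * t + a 6 * t ^ 2) * x + a 3 * x ^ 2) := by
      apply intervalIntegral.integral_congr
      intro x _
      simp [stmt8P]; ring
    rw [this, quad_integral]
  have outer : (∫ t in tn..(tn + Δt), ∫ x in l..r, stmt8P a t x)
      = (a 0 * (r - l) + a 1 / 2 * (r ^ 2 - l ^ 2) + a 3 / 3 * (r ^ 3 - l ^ 3))
          * ((tn + Δt) - tn)
        + (a 2 * (r - l) + a 4 / 2 * (r ^ 2 - l ^ 2)) / 2 * ((tn + Δt) ^ 2 - tn ^ 2)
        + (a 5 * (r - l) + a 6 / 2 * (r ^ 2 - l ^ 2)) / 3 * ((tn + Δt) ^ 3 - tn ^ 3) := by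
    have : (∫ t in tn..(tn + Δt), ∫ x in l..r, stmt8P a t x)
        = ∫ t in tn..(tn + Δt),
            ((a 0 * (r - l) + a 1 / 2 * (r ^ 2 - l ^ 2) + a 3 / 3 * (r ^ 3 - l ^ 3))
              + (a 2 * (r - l) + a 4 / 2 * (r ^ 2 - l ^ 2)) * t
              + (a 5 * (r - l) + a 6 / 2 * (r ^ 2 - l ^ 2)) * t ^ 2) := by
      apply intervalIntegral.integral_congr
      intro t _
      simp only []
      rw [inner t]; ring
    rw [this, quad_integral]
  rw [inner tn] at h7
  rw [outer]
  have hΔx' : Δx ≠ 0 := ne_of_gt hΔx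
  have hΔt' : Δt ≠ 0 := ne_of_gt hΔt
  simp only [stmt8P] at h1 h2 h3 h4 h5 h6
  field_simp
  linear_combination (144 * Δt) * h7 + (12 * Δt * Δx) * h1 + (12 * Δt * Δx) * h2
    + (48 * Δt * Δx) * h3 + (48 * Δt * Δx) * h4 - (60 * Δt * Δx) * h5 - (60 * Δt * Δx) * h6
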